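/- Let G be a finite group. Then G embeds into a finite direct product G_{p_1} × … × G_{p_s} for some primes p_1,…,p_s (not necessarily distinct) if and only if G embeds into a group of the form G_{p_1} × … × G_{p_s} × (C_{|G|})^m where p_1,…,p_s are prime divisors of |G| (not necessarily distinct), m ∈ ℕ, and C_{|G|} is the cyclic group of order |G|. -/

import Mathlib

/-- The holomorph-type action: a unit `u` of `ZMod p` acts on the additive group `ZMod p`
(viewed multiplicatively) by multiplication by `u`. -/
def holAction (p : ℕ) : (ZMod p)ˣ →* MulAut (Multiplicative (ZMod p)) where
  toFun u := AddEquiv.toMultiplicative (AddAut.mulLeft u)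
  map_one' := by
    ext x
    change Multiplicative.ofAdd (((1 : (ZMod p)ˣ) : ZMod p) * Multiplicative.toAdd x) = x
    simp
  map_mul' u v := by
    ext x
    change Multiplicative.ofAdd (((u * v : (ZMod p)ˣ) : ZMod p) * Multiplicative.toAdd x) =
      Multiplicative.ofAdd ((u : ZMod p) * ((v : ZMod p) * Multiplicative.toAdd x))
    simp [mul_assoc]

/-- `G_p = (ℤ/pℤ) ⋊ (ℤ/pℤ)ˣ`, the holomorph of the cyclic group of order `p`, with units
acting by multiplication. -/
def Holo (p : ℕ) : Type :=
  SemidirectProduct (Multiplicative (ZMod p)) (ZMod p)ˣ (holAction p)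

instance (p : ℕ) : Group (Holo p) :=
  inferInstanceAs (Group (SemidirectProduct _ _ _))

/-- casting along an equality of primes -/
def holoCast {p q : ℕ} (h : p = q) : Holo p →* Holo q := by
  subst h; exact MonoidHom.id _

lemma holoCast_eq_one {p q : ℕ} (h : p = q) {x : Holo p} :
    holoCast h x = 1 ↔ x = 1 := by subst h; exact Iff.rfl

def Holo.inr (p : ℕ) : (ZMod p)ˣ →* Holo p := SemidirectProduct.inr

def Holo.rightHom (p : ℕ) : Holo p →* (ZMod p)ˣ := SemidirectProduct.rightHom

lemma Holo.inr_injective (p : ℕ) : Function.Injective (Holo.inr p) :=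
  SemidirectProduct.inr_injective

lemma Holo.orderOf_dvd_of_rightHom {p : ℕ} {x : Holo p} (h : Holo.rightHom p x = 1) :
    orderOf x ∣ p := by
  have hx : x ∈ (SemidirectProduct.rightHom :
      SemidirectProduct (Multiplicative (ZMod p)) (ZMod p)ˣ (holAction p) →* _).ker := h
  rw [← SemidirectProduct.range_inl_eq_ker_rightHom] at hx
  obtain ⟨a, rfl⟩ := hx
  change orderOf (SemidirectProduct.inl a :
    SemidirectProduct (Multiplicative (ZMod p)) (ZMod p)ˣ (holAction p)) ∣ p
  rw [orderOf_injective SemidirectProduct.inl SemidirectProduct.inl_injective]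
  calc orderOf a ∣ Nat.card (Multiplicative (ZMod p)) := orderOf_dvd_natCard a
    _ = p := Nat.card_zmod p

/-- an injective hom between finite cyclic groups when cards divide -/
lemma exists_injective_of_cyclic {H K : Type*} [Group H] [Group K] [Finite H] [Finite K]
    [IsCyclic H] [IsCyclic K] (hdvd : Nat.card H ∣ Nat.card K) :
    ∃ f : H →* K, Function.Injective f := by
  obtain ⟨g, hg⟩ := IsCyclic.exists_generator (α := H)
  obtain ⟨k, hk⟩ := IsCyclic.exists_generator (α := K)
  have hN : (0:ℕ) < Nat.card K := Nat.card_pos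
  have hgord : orderOf g = Nat.card H := orderOf_eq_card_of_forall_mem_zpowers hg
  have hkord : orderOf k = Nat.card K := orderOf_eq_card_of_forall_mem_zpowers hk
  set d := Nat.card H with hd
  set N := Nat.card K with hNe
  set y := k ^ (N / d)
  have hdpos : 0 < d := Nat.card_pos
  have hyord : orderOf y = d := by
    rw [orderOf_pow, hkord]
    rw [Nat.gcd_eq_right (Nat.div_dvd_of_dvd hdvd)]
    exact Nat.div_div_self hdvd hN.ne'
  have hdvd' : orderOf y ∣ orderOf g := by rw [hyord, hgord]
  refine ⟨monoidHomOfForallMemZpowers hg hdvd', ?_⟩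
  rw [injective_iff_map_eq_one]
  intro x hx
  obtain ⟨i, rfl⟩ := Subgroup.mem_zpowers_iff.mp (hg x)
  rw [map_zpow, monoidHomOfForallMemZpowers_apply_gen] at hx
  have : (orderOf y : ℤ) ∣ i := orderOf_dvd_iff_zpow_eq_one.mpr hx
  rw [hyord, ← hgord] at this
  exact orderOf_dvd_iff_zpow_eq_one.mp this

lemma Nat.card_mult_zmod (n : ℕ) : Nat.card (Multiplicative (ZMod n)) = n := Nat.card_zmod n


/-- A finite group `G` embeds into a finite direct product `G_{p₁} × … × G_{p_s}` for some
primes `pᵢ` if and only if it embeds into a group of the form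
`G_{p₁} × … × G_{p_s} × (C_{|G|})^m` where the `pᵢ` are prime divisors of `|G|` and
`C_{|G|}` is the cyclic group of order `|G|`. -/
theorem stmt_11 (G : Type) [Group G] [Finite G] :
    (∃ (s : ℕ) (ps : Fin s → ℕ), (∀ i, (ps i).Prime) ∧
      ∃ f : G →* (∀ i, Holo (ps i)), Function.Injective f) ↔
    (∃ (s : ℕ) (ps : Fin s → ℕ), (∀ i, (ps i).Prime ∧ ps i ∣ Nat.card G) ∧
      ∃ (m : ℕ) (f : G →* (∀ i, Holo (ps i)) × (Fin m → Multiplicative (ZMod (Nat.card G)))),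
        Function.Injective f) := by
  classical
  set n := Nat.card G with hn
  have hn0 : n ≠ 0 := Nat.card_pos.ne'
  haveI : NeZero n := ⟨hn0⟩
  constructor
  · rintro ⟨s, ps, hps, f, hf⟩
    by_cases hG : Subsingleton G
    · exact ⟨0, Fin.elim0, fun i => i.elim0, 0, 1,
        fun a b _ => Subsingleton.elim a b⟩
    have hn1 : 1 < n := by
      rw [hn, Finite.one_lt_card_iff_nontrivial]
      exact not_subsingleton_iff_nontrivial.mp hG
    set q := n.minFac with hqdef
    have hq : q.Prime := Nat.minFac_prime (by omega)
    have hqn : q ∣ n := Nat.minFac_dvd n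
    set qs : Fin s → ℕ := fun i => if ps i ∣ n then ps i else q with hqs
    have hqsp : ∀ i, (qs i).Prime ∧ qs i ∣ n := by
      intro i
      simp only [hqs]
      split
      · exact ⟨hps i, by assumption⟩
      · exact ⟨hq, hqn⟩
    -- component maps
    set compf : ∀ i : Fin s, G →* Holo (ps i) :=
      fun i => (Pi.evalMonoidHom (fun j => Holo (ps j)) i).comp f with hcompf
    have key : ∀ i : Fin s, ∃ (a : G →* Holo (qs i)) (b : G →* Multiplicative (ZMod n)),
        ∀ g : G, a g = 1 → b g = 1 → compf i g = 1 := by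
      intro i
      by_cases hd : ps i ∣ n
      · have e : ps i = qs i := by simp only [hqs]; rw [if_pos hd]
        exact ⟨(holoCast e).comp (compf i), 1, fun g ha _ => (holoCast_eq_one e).mp ha⟩
      · have e : q = qs i := by simp only [hqs]; rw [if_neg hd]
        haveI : Fact (ps i).Prime := ⟨hps i⟩
        set ψ : G →* (ZMod (ps i))ˣ := (Holo.rightHom (ps i)).comp (compf i) with hψ
        have hψ1 : ∀ g : G, ψ g = 1 → compf i g = 1 := by
          intro g hg
          have h1 : orderOf (compf i g) ∣ ps i := Holo.orderOf_dvd_of_rightHom hg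
          have h2 : orderOf (compf i g) ∣ n :=
            (orderOf_map_dvd (compf i) g).trans (hn ▸ orderOf_dvd_natCard g)
          have hco : Nat.Coprime (ps i) n := ((hps i).coprime_iff_not_dvd).mpr hd
          have : orderOf (compf i g) ∣ 1 := hco ▸ Nat.dvd_gcd h1 h2
          rw [Nat.dvd_one] at this
          exact orderOf_eq_one_iff.mp this
        have hcard : Nat.card ψ.range ∣ Nat.card (Multiplicative (ZMod n)) := by
          rw [Nat.card_mult_zmod]
          exact (Subgroup.card_dvd_of_surjective ψ.rangeRestrict
            ψ.rangeRestrict_surjective).trans (dvd_refl n)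
        obtain ⟨ι, hι⟩ := exists_injective_of_cyclic hcard
        refine ⟨1, ι.comp ψ.rangeRestrict, ?_⟩
        intro g _ hb
        apply hψ1
        have : ψ.rangeRestrict g = 1 := by
          apply hι; rw [map_one]; exact hb
        have := congrArg (Subtype.val) this
        simpa using this
    choose a b hab using key
    refine ⟨s, qs, hqsp, s, ?_⟩
    refine ⟨{ toFun := fun g => (fun i => a i g, fun i => b i g),
              map_one' := ?_, map_mul' := ?_ }, ?_⟩
    · refine Prod.ext ?_ ?_ <;> funext i <;> simp
    · intro x y; refine Prod.ext ?_ ?_ <;> funext i <;> simp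
    · rw [injective_iff_map_eq_one]
      intro g hg
      simp only [MonoidHom.coe_mk, OneHom.coe_mk, Prod.mk_eq_one] at hg
      obtain ⟨h1, h2⟩ := hg
      apply (injective_iff_map_eq_one f).mp hf
      funext i
      exact hab i g (congrFun h1 i) (congrFun h2 i)
  · rintro ⟨s, ps, hps, m, f, hf⟩
    obtain ⟨Q, hQp, hQgt, hQmod⟩ := Nat.exists_prime_gt_modEq_one n hn0
    haveI : Fact Q.Prime := ⟨hQp⟩
    have hdvdQ : n ∣ Q - 1 := (Nat.modEq_iff_dvd' (by omega)).mp hQmod.symm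
    have hcard : Nat.card (Multiplicative (ZMod n)) ∣ Nat.card (ZMod Q)ˣ := by
      rw [Nat.card_mult_zmod, Nat.card_eq_fintype_card, ZMod.card_units]
      exact hdvdQ
    obtain ⟨ι, hι⟩ := exists_injective_of_cyclic hcard
    set f1 : G →* ∀ i, Holo (ps i) := (MonoidHom.fst _ _).comp f with hf1
    set f2 : G →* (Fin m → Multiplicative (ZMod n)) := (MonoidHom.snd _ _).comp f with hf2
    set qs : Fin (s + m) → ℕ := fun i => if h : (i : ℕ) < s then ps ⟨i, h⟩ else Q with hqs
    have hqsp : ∀ i, (qs i).Prime := by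
      intro i; simp only [hqs]; split
      · exact (hps _).1
      · exact hQp
    have key : ∀ i : Fin (s + m), ∃ c : G →* Holo (qs i), ∀ g : G, c g = 1 →
        if h : (i : ℕ) < s then f1 g ⟨i, h⟩ = 1
        else ∀ hm : (i : ℕ) - s < m, f2 g ⟨(i : ℕ) - s, hm⟩ = 1 := by
      intro i
      by_cases h : (i : ℕ) < s
      · have e : ps ⟨i, h⟩ = qs i := by simp only [hqs]; rw [dif_pos h]
        refine ⟨(holoCast e).comp ((Pi.evalMonoidHom (fun j => Holo (ps j)) ⟨i, h⟩).comp f1), ?_⟩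
        intro g hg
        rw [dif_pos h]
        exact (holoCast_eq_one e).mp hg
      · have e : Q = qs i := by simp only [hqs]; rw [dif_neg h]
        have hm0 : (i : ℕ) - s < m := by omega
        refine ⟨(holoCast e).comp ((Holo.inr Q).comp (ι.comp
          ((Pi.evalMonoidHom (fun _ : Fin m => Multiplicative (ZMod n)) ⟨(i : ℕ) - s, hm0⟩).comp
            f2))), ?_⟩
        intro g hg
        rw [dif_neg h]
        intro hm
        have h1 := (holoCast_eq_one e).mp hg
        have h2 : ι (f2 g ⟨(i : ℕ) - s, hm0⟩) = 1 := Holo.inr_injective Q (by simpa using h1)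
        have h3 : f2 g ⟨(i : ℕ) - s, hm0⟩ = 1 := hι (by simpa using h2)
        exact h3
    choose c hc using key
    refine ⟨s + m, qs, hqsp, ?_⟩
    refine ⟨{ toFun := fun g i => c i g, map_one' := ?_, map_mul' := ?_ }, ?_⟩
    · funext i; simp
    · intro x y; funext i; simp
    · rw [injective_iff_map_eq_one]
      intro g hg
      simp only [MonoidHom.coe_mk, OneHom.coe_mk] at hg
      apply (injective_iff_map_eq_one f).mp hf
      have hci : ∀ i, c i g = 1 := fun i => congrFun hg i
      have hfst : (f g).1 = 1 := by
        funext j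
        have := hc ⟨(j : ℕ), by omega⟩ g (hci _)
        rw [dif_pos (show ((⟨(j : ℕ), by omega⟩ : Fin (s + m)) : ℕ) < s from j.isLt)] at this
        simpa [hf1] using this
      have hsnd : (f g).2 = 1 := by
        funext j
        have := hc ⟨s + (j : ℕ), by omega⟩ g (hci _)
        rw [dif_neg (show ¬ ((⟨s + (j : ℕ), by omega⟩ : Fin (s + m)) : ℕ) < s by simp)] at this
        have h2 := this (show s + (j : ℕ) - s < m by omega)
        have h3 : (⟨s + (j : ℕ) - s, by omega⟩ : Fin m) = j := Fin.ext (by simp)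
        rw [h3] at h2
        simpa [hf2] using h2
      calc f g = ((f g).1, (f g).2) := rfl
        _ = (1, 1) := by rw [hfst, hsnd]
        _ = 1 := rfl
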